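/- Let Δ' = ∂_{x_0}² + 2Δ and η' = x_0² + 2η act on B = ℂ[x_0] ⊗ A, where A is the supercommutative algebra on even x_1,...,x_n,y_1,...,y_n and odd θ_1,...,θ_m,ϑ_1,...,ϑ_m, Δ = Σ_i ∂_{x_i}∂_{y_i} + Σ_r ∂_{θ_r}∂_{ϑ_r}, and η = Σ_i x_i y_i + Σ_r θ_r ϑ_r. Then Δ'∘η' − η'∘Δ' = (2 + 4(n − m))·Id + 4·[x_0∂_{x_0} + Σ_{i=1}^n (x_i∂_{x_i} + y_i∂_{y_i}) + Σ_{r=1}^m (θ_r∂_{θ_r} + ϑ_r∂_{ϑ_r})]. -/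

import Mathlib

set_option maxHeartbeats 1000000
set_option synthInstance.maxHeartbeats 400000


open TensorProduct MvPolynomial

noncomputable section

variable (n m : ℕ)

/-- bosonic polynomial part with the extra variable x₀ (index `Sum.inl 0`) -/
abbrev PolyB (n : ℕ) := MvPolynomial (Fin (n + 1) ⊕ Fin n) ℂ
abbrev ExtA (m : ℕ) := ExteriorAlgebra ℂ ((Fin m ⊕ Fin m) → ℂ)
/-- B = ℂ[x₀] ⊗ A -/
abbrev SAlgB (n m : ℕ) := PolyB n ⊗[ℂ] ExtA m

def x0v : PolyB n := X (Sum.inl 0)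
def xv (i : Fin n) : PolyB n := X (Sum.inl i.succ)
def yv (i : Fin n) : PolyB n := X (Sum.inr i)
def θv (r : Fin m) : ExtA m := ExteriorAlgebra.ι ℂ (Pi.single (Sum.inl r) 1)
def ϑv (r : Fin m) : ExtA m := ExteriorAlgebra.ι ℂ (Pi.single (Sum.inr r) 1)

def dθ (r : Fin m) : Module.End ℂ (ExtA m) :=
  CliffordAlgebra.contractLeft (Q := (0 : QuadraticForm ℂ ((Fin m ⊕ Fin m) → ℂ)))
    (LinearMap.proj (Sum.inl r))
def dϑ (r : Fin m) : Module.End ℂ (ExtA m) :=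
  CliffordAlgebra.contractLeft (Q := (0 : QuadraticForm ℂ ((Fin m ⊕ Fin m) → ℂ)))
    (LinearMap.proj (Sum.inr r))

def pdx0 : Module.End ℂ (SAlgB n m) :=
  TensorProduct.map ((pderiv (Sum.inl 0) : Derivation ℂ (PolyB n) (PolyB n)) : PolyB n →ₗ[ℂ] PolyB n) LinearMap.id
def pdx (i : Fin n) : Module.End ℂ (SAlgB n m) :=
  TensorProduct.map ((pderiv (Sum.inl i.succ) : Derivation ℂ (PolyB n) (PolyB n)) : PolyB n →ₗ[ℂ] PolyB n) LinearMap.id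
def pdy (i : Fin n) : Module.End ℂ (SAlgB n m) :=
  TensorProduct.map ((pderiv (Sum.inr i) : Derivation ℂ (PolyB n) (PolyB n)) : PolyB n →ₗ[ℂ] PolyB n) LinearMap.id
def pdθ (r : Fin m) : Module.End ℂ (SAlgB n m) := TensorProduct.map LinearMap.id (dθ m r)
def pdϑ (r : Fin m) : Module.End ℂ (SAlgB n m) := TensorProduct.map LinearMap.id (dϑ m r)

def mx0 : Module.End ℂ (SAlgB n m) := LinearMap.mulLeft ℂ (x0v n ⊗ₜ[ℂ] 1)
def mx (i : Fin n) : Module.End ℂ (SAlgB n m) := LinearMap.mulLeft ℂ (xv n i ⊗ₜ[ℂ] 1)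
def my (i : Fin n) : Module.End ℂ (SAlgB n m) := LinearMap.mulLeft ℂ (yv n i ⊗ₜ[ℂ] 1)
def mθ (r : Fin m) : Module.End ℂ (SAlgB n m) := LinearMap.mulLeft ℂ ((1 : PolyB n) ⊗ₜ[ℂ] θv m r)
def mϑ (r : Fin m) : Module.End ℂ (SAlgB n m) := LinearMap.mulLeft ℂ ((1 : PolyB n) ⊗ₜ[ℂ] ϑv m r)

/-- η = Σ_i x_i y_i + Σ_r θ_r ϑ_r -/
def ηelt : SAlgB n m :=
  (∑ i : Fin n, (xv n i * yv n i) ⊗ₜ[ℂ] (1 : ExtA m))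
    + ∑ r : Fin m, (1 : PolyB n) ⊗ₜ[ℂ] (θv m r * ϑv m r)

/-- Δ = Σ_i ∂_{x_i}∂_{y_i} + Σ_r ∂_{θ_r}∂_{ϑ_r} (no x₀ part) -/
def ΔS : Module.End ℂ (SAlgB n m) :=
  (∑ i : Fin n, pdx n m i ∘ₗ pdy n m i) + ∑ r : Fin m, pdθ n m r ∘ₗ pdϑ n m r

/-- Δ' = ∂_{x₀}² + 2Δ -/
def Δ' : Module.End ℂ (SAlgB n m) := pdx0 n m ∘ₗ pdx0 n m + (2 : ℂ) • ΔS n m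
/-- η' = multiplication by x₀² + 2η -/
def η'op : Module.End ℂ (SAlgB n m) :=
  LinearMap.mulLeft ℂ ((x0v n ^ 2) ⊗ₜ[ℂ] (1 : ExtA m) + (2 : ℂ) • ηelt n m)

namespace OspAux

/-- commutator -/
def K {A : Type*} [Ring A] (a b : A) : A := a * b - b * a

section Kgen
variable {A : Type*} [Ring A]

theorem K_add_left (a b c : A) : K (a + b) c = K a c + K b c := by
  unfold K; noncomm_ring

theorem K_add_right (a b c : A) : K a (b + c) = K a b + K a c := by
  unfold K; noncomm_ring

theorem K_smul_left [Algebra ℂ A] (c : ℂ) (a b : A) : K (c • a) b = c • K a b := by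
  unfold K; rw [smul_mul_assoc, mul_smul_comm, smul_sub]

theorem K_smul_right [Algebra ℂ A] (c : ℂ) (a b : A) : K a (c • b) = c • K a b := by
  unfold K; rw [smul_mul_assoc, mul_smul_comm, smul_sub]

theorem K_sum_left {ι : Type*} (s : Finset ι) (f : ι → A) (b : A) :
    K (∑ i ∈ s, f i) b = ∑ i ∈ s, K (f i) b := by
  unfold K; rw [Finset.sum_mul, Finset.mul_sum, Finset.sum_sub_distrib]

theorem K_sum_right {ι : Type*} (s : Finset ι) (f : ι → A) (b : A) :
    K b (∑ i ∈ s, f i) = ∑ i ∈ s, K b (f i) := by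
  unfold K; rw [Finset.sum_mul, Finset.mul_sum, Finset.sum_sub_distrib]

theorem quad_diag (D1 D2 M1 M2 : A) (h11 : D1*M1 = 1 - M1*D1) (h12 : D1*M2 = -(M2*D1))
    (h21 : D2*M1 = -(M1*D2)) (h22 : D2*M2 = 1 - M2*D2) :
    K (D1*D2) (M1*M2) = -1 + M1*D1 + M2*D2 := by
  have e2 : D2*(M1*M2) = -(M1*(1 - M2*D2)) := by
    rw [← mul_assoc, h21, neg_mul, mul_assoc, h22]
  have e1 : D1*(M2*D2) = (-(M2*D1))*D2 := by rw [← mul_assoc, h12]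
  unfold K
  rw [mul_assoc D1 D2, e2, mul_neg, mul_sub, mul_one, mul_sub, h11, ← mul_assoc D1 M1, h11,
    sub_mul, one_mul, mul_assoc M1 D1, e1]
  noncomm_ring

theorem quad_cross (D1 D2 M1 M2 : A) (h11 : D1*M1 = -(M1*D1)) (h12 : D1*M2 = -(M2*D1))
    (h21 : D2*M1 = -(M1*D2)) (h22 : D2*M2 = -(M2*D2)) :
    K (D1*D2) (M1*M2) = 0 := by
  have e2 : D2*(M1*M2) = -(M1*(-(M2*D2))) := by
    rw [← mul_assoc, h21, neg_mul, mul_assoc, h22]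
  have e1 : D1*(M2*D2) = (-(M2*D1))*D2 := by rw [← mul_assoc, h12]
  unfold K
  rw [mul_assoc D1 D2, e2]
  simp only [mul_neg, neg_neg]
  rw [← mul_assoc D1 M1, h11, neg_mul, mul_assoc M1 D1, e1]
  noncomm_ring

end Kgen

section extside
variable (m : ℕ)

abbrev MLθ (r : Fin m) : Module.End ℂ (ExtA m) := LinearMap.mulLeft ℂ (θv m r)
abbrev MLϑ (r : Fin m) : Module.End ℂ (ExtA m) := LinearMap.mulLeft ℂ (ϑv m r)

theorem contract_mul (f : Module.Dual ℂ ((Fin m ⊕ Fin m) → ℂ)) (v : (Fin m ⊕ Fin m) → ℂ) :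
    (CliffordAlgebra.contractLeft (Q := (0 : QuadraticForm ℂ ((Fin m ⊕ Fin m) → ℂ))) f) *
      LinearMap.mulLeft ℂ (ExteriorAlgebra.ι ℂ v)
    = f v • (1 : Module.End ℂ (ExtA m))
      - LinearMap.mulLeft ℂ (ExteriorAlgebra.ι ℂ v) * CliffordAlgebra.contractLeft f := by
  apply LinearMap.ext; intro x
  simp [Module.End.mul_apply, CliffordAlgebra.contractLeft_ι_mul]

theorem dθ_Mθ_same (r : Fin m) : dθ m r * MLθ m r = 1 - MLθ m r * dθ m r := by
  have h := contract_mul m (LinearMap.proj (Sum.inl r)) (Pi.single (Sum.inl r) 1)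
  simpa [dθ, θv, MLθ, Pi.single_eq_same] using h

theorem dϑ_Mϑ_same (r : Fin m) : dϑ m r * MLϑ m r = 1 - MLϑ m r * dϑ m r := by
  have h := contract_mul m (LinearMap.proj (Sum.inr r)) (Pi.single (Sum.inr r) 1)
  simpa [dϑ, ϑv, MLϑ, Pi.single_eq_same] using h

theorem dθ_Mθ_ne {r s : Fin m} (h : r ≠ s) : dθ m r * MLθ m s = -(MLθ m s * dθ m r) := by
  have h2 := contract_mul m (LinearMap.proj (Sum.inl r)) (Pi.single (Sum.inl s) 1)
  simpa [dθ, θv, MLθ, Pi.single_apply, h.symm, zero_sub] using h2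

theorem dϑ_Mϑ_ne {r s : Fin m} (h : r ≠ s) : dϑ m r * MLϑ m s = -(MLϑ m s * dϑ m r) := by
  have h2 := contract_mul m (LinearMap.proj (Sum.inr r)) (Pi.single (Sum.inr s) 1)
  simpa [dϑ, ϑv, MLϑ, Pi.single_apply, h.symm, zero_sub] using h2

theorem dθ_Mϑ (r s : Fin m) : dθ m r * MLϑ m s = -(MLϑ m s * dθ m r) := by
  have h2 := contract_mul m (LinearMap.proj (Sum.inl r)) (Pi.single (Sum.inr s) 1)
  simpa [dθ, ϑv, MLϑ, Pi.single_apply, zero_sub] using h2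

theorem dϑ_Mθ (r s : Fin m) : dϑ m r * MLθ m s = -(MLθ m s * dϑ m r) := by
  have h2 := contract_mul m (LinearMap.proj (Sum.inr r)) (Pi.single (Sum.inl s) 1)
  simpa [dϑ, θv, MLθ, Pi.single_apply, zero_sub] using h2

theorem ext_diag (r : Fin m) :
    K (dθ m r * dϑ m r) (MLθ m r * MLϑ m r)
      = -1 + MLθ m r * dθ m r + MLϑ m r * dϑ m r :=
  quad_diag _ _ _ _ (dθ_Mθ_same m r) (dθ_Mϑ m r r) (dϑ_Mθ m r r) (dϑ_Mϑ_same m r)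

theorem ext_cross {r s : Fin m} (h : r ≠ s) :
    K (dθ m r * dϑ m r) (MLθ m s * MLϑ m s) = 0 :=
  quad_cross _ _ _ _ (dθ_Mθ_ne m h) (dθ_Mϑ m r s) (dϑ_Mθ m r s) (dϑ_Mϑ_ne m h)

end extside
end OspAux

namespace OspAux
open LinearMap

section poly
variable (n : ℕ)

abbrev Dop (j : Fin (n+1) ⊕ Fin n) : Module.End ℂ (PolyB n) :=
  ((pderiv j : Derivation ℂ (PolyB n) (PolyB n)) : PolyB n →ₗ[ℂ] PolyB n)
abbrev Mop (a : PolyB n) : Module.End ℂ (PolyB n) := LinearMap.mulLeft ℂ a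

theorem Dop_mul_M (j : Fin (n+1) ⊕ Fin n) (a : PolyB n) :
    Dop n j * Mop n a = Mop n (pderiv j a) + Mop n a * Dop n j := by
  apply LinearMap.ext; intro p
  simp only [Module.End.mul_apply, LinearMap.mulLeft_apply, LinearMap.add_apply,
    Derivation.coeFn_coe, pderiv_mul]

theorem Dop_comm_M {j : Fin (n+1) ⊕ Fin n} {a : PolyB n} (h : pderiv j a = 0) :
    Dop n j * Mop n a = Mop n a * Dop n j := by
  rw [Dop_mul_M, h]
  simp [LinearMap.mulLeft_zero_eq_zero]

theorem K_DD_M {j k : Fin (n+1) ⊕ Fin n} {a : PolyB n} (hj : pderiv j a = 0)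
    (hk : pderiv k a = 0) : K (Dop n j * Dop n k) (Mop n a) = 0 := by
  unfold K
  rw [mul_assoc, Dop_comm_M n hk, ← mul_assoc, Dop_comm_M n hj, mul_assoc, sub_self]

theorem poly_diag0 : K (Dop n (.inl 0) * Dop n (.inl 0)) (Mop n (x0v n ^ 2))
    = (2:ℂ) • 1 + (4:ℂ) • (Mop n (x0v n) * Dop n (.inl 0)) := by
  unfold K
  apply LinearMap.ext; intro p
  simp only [LinearMap.sub_apply, LinearMap.add_apply, LinearMap.smul_apply,
    Module.End.mul_apply, LinearMap.mulLeft_apply, Module.End.one_apply,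
    Derivation.coeFn_coe, map_add, pderiv_mul, pow_two, x0v, pderiv_X_self, smul_eq_C_mul]
  simp [pderiv_mul, map_ofNat]
  ring

theorem poly_diagi (i : Fin n) :
    K (Dop n (.inl i.succ) * Dop n (.inr i)) (Mop n (xv n i * yv n i))
    = 1 + Mop n (xv n i) * Dop n (.inl i.succ) + Mop n (yv n i) * Dop n (.inr i) := by
  unfold K
  apply LinearMap.ext; intro p
  simp only [LinearMap.sub_apply, LinearMap.add_apply, Module.End.mul_apply,
    LinearMap.mulLeft_apply, Module.End.one_apply, Derivation.coeFn_coe, pderiv_mul,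
    xv, yv, pderiv_X_self, pderiv_X_of_ne (by simp : (Sum.inr i : Fin (n+1) ⊕ Fin n) ≠ .inl i.succ),
    pderiv_X_of_ne (by simp : (Sum.inl i.succ : Fin (n+1) ⊕ Fin n) ≠ .inr i),
    map_add]
  simp [pderiv_mul, pderiv_X_of_ne (by simp : (Sum.inr i : Fin (n+1) ⊕ Fin n) ≠ .inl i.succ),
    pderiv_X_of_ne (by simp : (Sum.inl i.succ : Fin (n+1) ⊕ Fin n) ≠ .inr i)]
  ring

theorem pderiv_x0sq_x (i : Fin n) : pderiv (Sum.inl i.succ) (x0v n ^ 2) = 0 := by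
  simp [x0v, pow_two, pderiv_mul, pderiv_X_of_ne (by simp [(Fin.succ_ne_zero i).symm] :
    (Sum.inl (0 : Fin (n+1)) : Fin (n+1) ⊕ Fin n) ≠ .inl i.succ)]

theorem pderiv_x0sq_y (i : Fin n) : pderiv (Sum.inr i) (x0v n ^ 2) = 0 := by
  simp [x0v, pow_two, pderiv_mul]

theorem pderiv_xy_x0 (i : Fin n) : pderiv (Sum.inl 0) (xv n i * yv n i) = 0 := by
  simp [xv, yv, pderiv_mul, pderiv_X_of_ne (by simp [Fin.succ_ne_zero i] :
    (Sum.inl i.succ : Fin (n+1) ⊕ Fin n) ≠ .inl 0)]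

theorem pderiv_xy_x {i j : Fin n} (h : j ≠ i) :
    pderiv (Sum.inl i.succ) (xv n j * yv n j) = 0 := by
  have hx : (Sum.inl j.succ : Fin (n+1) ⊕ Fin n) ≠ .inl i.succ := by
    simp only [ne_eq, Sum.inl.injEq]
    exact fun hh => h (Fin.succ_injective _ hh)
  simp [xv, yv, pderiv_mul, pderiv_X_of_ne hx]

theorem pderiv_xy_y {i j : Fin n} (h : j ≠ i) :
    pderiv (Sum.inr i) (xv n j * yv n j) = 0 := by
  have hy : (Sum.inr j : Fin (n+1) ⊕ Fin n) ≠ .inr i := by simp [h]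
  simp [xv, yv, pderiv_mul, pderiv_X_of_ne hy]

end poly
end OspAux

namespace OspAux
open LinearMap

section mulLeftLemmas
variable {A : Type*} [Ring A] [Algebra ℂ A]

theorem mulLeft_add' (a b : A) : mulLeft ℂ (a + b) = mulLeft ℂ a + mulLeft ℂ b := by
  apply LinearMap.ext; intro x; simp [add_mul]

theorem mulLeft_smul' (c : ℂ) (a : A) : mulLeft ℂ (c • a) = c • mulLeft ℂ a := by
  apply LinearMap.ext; intro x; simp [smul_mul_assoc]

theorem mulLeft_sum' {ι : Type*} (s : Finset ι) (f : ι → A) :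
    mulLeft ℂ (∑ i ∈ s, f i) = ∑ i ∈ s, mulLeft ℂ (f i) := by
  apply LinearMap.ext; intro x
  simp [Finset.sum_mul, LinearMap.sum_apply]

end mulLeftLemmas

section tensorLemmas
variable {R : Type*} [CommRing R] {M N P : Type*} [AddCommGroup M] [AddCommGroup N]
  [AddCommGroup P] [Module R M] [Module R N] [Module R P]

theorem rTensor_sum {ι : Type*} (s : Finset ι) (f : ι → (N →ₗ[R] P)) :
    (∑ i ∈ s, f i).rTensor M = ∑ i ∈ s, (f i).rTensor M := by
  simp only [← coe_rTensorHom]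
  exact map_sum _ _ _

theorem lTensor_sum {ι : Type*} (s : Finset ι) (f : ι → (N →ₗ[R] P)) :
    (∑ i ∈ s, f i).lTensor M = ∑ i ∈ s, (f i).lTensor M := by
  simp only [← coe_lTensorHom]
  exact map_sum _ _ _

end tensorLemmas

section tensor
variable (n m : ℕ)

theorem mul_tmul_one (a : PolyB n) :
    mulLeft ℂ (a ⊗ₜ[ℂ] (1 : ExtA m)) = rTensor (ExtA m) (mulLeft ℂ a) := by
  apply TensorProduct.ext'; intro p w
  simp [Algebra.TensorProduct.tmul_mul_tmul]

theorem mul_one_tmul (b : ExtA m) :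
    mulLeft ℂ ((1 : PolyB n) ⊗ₜ[ℂ] b) = lTensor (PolyB n) (mulLeft ℂ b) := by
  apply TensorProduct.ext'; intro p w
  simp [Algebra.TensorProduct.tmul_mul_tmul]

theorem K_rT_lT (f : Module.End ℂ (PolyB n)) (g : Module.End ℂ (ExtA m)) :
    K (rTensor (ExtA m) f) (lTensor (PolyB n) g) = 0 := by
  unfold K
  rw [Module.End.mul_eq_comp, Module.End.mul_eq_comp, rTensor_comp_lTensor, lTensor_comp_rTensor, sub_self]

theorem K_lT_rT (g : Module.End ℂ (ExtA m)) (f : Module.End ℂ (PolyB n)) :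
    K (lTensor (PolyB n) g) (rTensor (ExtA m) f) = 0 := by
  unfold K
  rw [Module.End.mul_eq_comp, Module.End.mul_eq_comp, rTensor_comp_lTensor, lTensor_comp_rTensor, sub_self]

theorem K_rT_rT (f g : Module.End ℂ (PolyB n)) :
    K (rTensor (ExtA m) f) (rTensor (ExtA m) g) = rTensor (ExtA m) (K f g) := by
  unfold K
  rw [rTensor_sub, rTensor_mul, rTensor_mul]

theorem K_lT_lT (f g : Module.End ℂ (ExtA m)) :
    K (lTensor (PolyB n) f) (lTensor (PolyB n) g) = lTensor (PolyB n) (K f g) := by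
  unfold K
  rw [lTensor_sub, lTensor_mul, lTensor_mul]

end tensor

section ops
variable (n m : ℕ)

def Apoly : Module.End ℂ (PolyB n) :=
  Dop n (.inl 0) * Dop n (.inl 0)
    + (2:ℂ) • ∑ i : Fin n, Dop n (.inl i.succ) * Dop n (.inr i)

def Bpoly : Module.End ℂ (PolyB n) :=
  Mop n (x0v n ^ 2) + (2:ℂ) • ∑ i : Fin n, Mop n (xv n i * yv n i)

def Cext : Module.End ℂ (ExtA m) := (2:ℂ) • ∑ r : Fin m, dθ m r * dϑ m r

def Eext : Module.End ℂ (ExtA m) := (2:ℂ) • ∑ r : Fin m, MLθ m r * MLϑ m r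

theorem Δ'_eq : Δ' n m = rTensor (ExtA m) (Apoly n) + lTensor (PolyB n) (Cext m) := by
  unfold Δ' ΔS Apoly Cext
  rw [rTensor_add, rTensor_smul, lTensor_smul, rTensor_sum, lTensor_sum, smul_add]
  have h0 : rTensor (ExtA m) (Dop n (.inl 0) * Dop n (.inl 0)) = pdx0 n m ∘ₗ pdx0 n m := by
    rw [rTensor_mul]; rfl
  have h1 : ∀ i : Fin n,
      rTensor (ExtA m) (Dop n (.inl i.succ) * Dop n (.inr i)) = pdx n m i ∘ₗ pdy n m i := by
    intro i; rw [rTensor_mul]; rfl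
  have h2 : ∀ r : Fin m, lTensor (PolyB n) (dθ m r * dϑ m r) = pdθ n m r ∘ₗ pdϑ n m r := by
    intro r; rw [lTensor_mul]; rfl
  simp only [h0, h1, h2]
  abel

theorem mulLeft_smulB (c : ℂ) (a : SAlgB n m) :
    mulLeft ℂ (c • a) = c • mulLeft ℂ a := by
  apply LinearMap.ext; intro x; simp [smul_mul_assoc]

theorem η'_eq : η'op n m = rTensor (ExtA m) (Bpoly n) + lTensor (PolyB n) (Eext m) := by
  unfold η'op ηelt Bpoly Eext
  rw [mulLeft_add', mulLeft_smulB, mulLeft_add', mulLeft_sum', mulLeft_sum']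
  rw [rTensor_add, rTensor_smul, lTensor_smul, rTensor_sum, lTensor_sum, smul_add]
  have h1 : ∀ i : Fin n,
      mulLeft ℂ ((xv n i * yv n i) ⊗ₜ[ℂ] (1 : ExtA m))
        = rTensor (ExtA m) (Mop n (xv n i * yv n i)) := fun i => mul_tmul_one n m _
  have h2 : ∀ r : Fin m,
      mulLeft ℂ ((1 : PolyB n) ⊗ₜ[ℂ] (θv m r * ϑv m r))
        = lTensor (PolyB n) (MLθ m r * MLϑ m r) := by
    intro r
    rw [mul_one_tmul, mulLeft_mul, Module.End.mul_eq_comp]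
  simp only [h1, h2, mul_tmul_one n m (x0v n ^ 2)]
  abel

theorem KAB : K (Apoly n) (Bpoly n)
    = (2:ℂ) • 1 + (4 * (n:ℂ)) • 1
      + (4:ℂ) • (Mop n (x0v n) * Dop n (.inl 0)
          + ∑ i : Fin n, (Mop n (xv n i) * Dop n (.inl i.succ)
              + Mop n (yv n i) * Dop n (.inr i))) := by
  unfold Apoly Bpoly
  rw [K_add_left, K_add_right, K_add_right, K_smul_right, K_smul_left, K_smul_left,
    K_smul_right, smul_smul]
  have h1 : K (Dop n (.inl 0) * Dop n (.inl 0)) (∑ i : Fin n, Mop n (xv n i * yv n i)) = 0 := by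
    rw [K_sum_right]
    exact Finset.sum_eq_zero fun i _ => K_DD_M n (pderiv_xy_x0 n i) (pderiv_xy_x0 n i)
  have h2 : K (∑ i : Fin n, Dop n (.inl i.succ) * Dop n (.inr i)) (Mop n (x0v n ^ 2)) = 0 := by
    rw [K_sum_left]
    exact Finset.sum_eq_zero fun i _ => K_DD_M n (pderiv_x0sq_x n i) (pderiv_x0sq_y n i)
  have h3 : K (∑ i : Fin n, Dop n (.inl i.succ) * Dop n (.inr i))
      (∑ i : Fin n, Mop n (xv n i * yv n i))
      = ∑ i : Fin n, (1 + Mop n (xv n i) * Dop n (.inl i.succ)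
          + Mop n (yv n i) * Dop n (.inr i)) := by
    rw [K_sum_left]
    refine Finset.sum_congr rfl fun i _ => ?_
    rw [K_sum_right]
    rw [Finset.sum_eq_single i
      (fun j _ hj => K_DD_M n (pderiv_xy_x n hj) (pderiv_xy_y n hj)) (by simp)]
    exact poly_diagi n i
  rw [h1, h2, h3, poly_diag0]
  simp only [smul_zero, Finset.sum_add_distrib, Finset.sum_const, Finset.card_univ,
    Fintype.card_fin]
  rw [← Nat.cast_smul_eq_nsmul ℂ n (1 : Module.End ℂ (PolyB n))]
  module

theorem KCE : K (Cext m) (Eext m)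
    = (-(4 * (m:ℂ))) • 1
      + (4:ℂ) • (∑ r : Fin m, (MLθ m r * dθ m r + MLϑ m r * dϑ m r)) := by
  unfold Cext Eext
  rw [K_smul_left, K_smul_right, smul_smul]
  have h3 : K (∑ r : Fin m, dθ m r * dϑ m r) (∑ r : Fin m, MLθ m r * MLϑ m r)
      = ∑ r : Fin m, (-1 + MLθ m r * dθ m r + MLϑ m r * dϑ m r) := by
    rw [K_sum_left]
    refine Finset.sum_congr rfl fun r _ => ?_
    rw [K_sum_right]
    rw [Finset.sum_eq_single r (fun s _ hs => ext_cross m hs.symm) (by simp)]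
    exact ext_diag m r
  rw [h3]
  simp only [Finset.sum_add_distrib, Finset.sum_const, Finset.card_univ, Fintype.card_fin]
  rw [← Nat.cast_smul_eq_nsmul ℂ m (-1 : Module.End ℂ (ExtA m))]
  module

end ops
end OspAux

open OspAux LinearMap

theorem osp_odd_commutator :
    Δ' n m ∘ₗ η'op n m - η'op n m ∘ₗ Δ' n m
      = ((2 : ℂ) + 4 * ((n : ℂ) - m)) • (1 : Module.End ℂ (SAlgB n m))
        + (4 : ℂ) • (mx0 n m ∘ₗ pdx0 n m
            + (∑ i : Fin n, (mx n m i ∘ₗ pdx n m i + my n m i ∘ₗ pdy n m i))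
            + ∑ r : Fin m, (mθ n m r ∘ₗ pdθ n m r + mϑ n m r ∘ₗ pdϑ n m r)) := by
  
  have hone : rTensor (ExtA m) (1 : Module.End ℂ (PolyB n)) = 1 := by
    rw [Module.End.one_eq_id, rTensor_id]; rfl
  have honeL : lTensor (PolyB n) (1 : Module.End ℂ (ExtA m)) = 1 := by
    rw [Module.End.one_eq_id, lTensor_id]; rfl
  have hx0 : mx0 n m ∘ₗ pdx0 n m
      = rTensor (ExtA m) (Mop n (x0v n) * Dop n (.inl 0)) := by
    rw [show mx0 n m = rTensor (ExtA m) (Mop n (x0v n)) from mul_tmul_one n m _,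
      show pdx0 n m = rTensor (ExtA m) (Dop n (.inl 0)) from rfl,
      ← Module.End.mul_eq_comp, ← rTensor_mul]
  have hxi : ∀ i : Fin n, mx n m i ∘ₗ pdx n m i + my n m i ∘ₗ pdy n m i
      = rTensor (ExtA m) (Mop n (xv n i) * Dop n (.inl i.succ)
          + Mop n (yv n i) * Dop n (.inr i)) := by
    intro i
    rw [show mx n m i = rTensor (ExtA m) (Mop n (xv n i)) from mul_tmul_one n m _,
      show pdx n m i = rTensor (ExtA m) (Dop n (.inl i.succ)) from rfl,
      show my n m i = rTensor (ExtA m) (Mop n (yv n i)) from mul_tmul_one n m _,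
      show pdy n m i = rTensor (ExtA m) (Dop n (.inr i)) from rfl,
      ← Module.End.mul_eq_comp, ← Module.End.mul_eq_comp, ← rTensor_mul, ← rTensor_mul, ← rTensor_add]
  have hθr : ∀ r : Fin m, mθ n m r ∘ₗ pdθ n m r + mϑ n m r ∘ₗ pdϑ n m r
      = lTensor (PolyB n) (MLθ m r * dθ m r + MLϑ m r * dϑ m r) := by
    intro r
    rw [show mθ n m r = lTensor (PolyB n) (MLθ m r) from mul_one_tmul n m _,
      show pdθ n m r = lTensor (PolyB n) (dθ m r) from rfl,
      show mϑ n m r = lTensor (PolyB n) (MLϑ m r) from mul_one_tmul n m _,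
      show pdϑ n m r = lTensor (PolyB n) (dϑ m r) from rfl,
      ← Module.End.mul_eq_comp, ← Module.End.mul_eq_comp, ← lTensor_mul, ← lTensor_mul, ← lTensor_add]
  have hK : Δ' n m ∘ₗ η'op n m - η'op n m ∘ₗ Δ' n m = K (Δ' n m) (η'op n m) := rfl
  rw [hK, Δ'_eq, η'_eq, K_add_left, K_add_right, K_add_right,
    K_rT_lT, K_lT_rT, K_rT_rT, K_lT_lT, KAB, KCE, add_zero, zero_add]
  rw [rTensor_add, rTensor_add, rTensor_smul, rTensor_smul, rTensor_smul, rTensor_add,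
    lTensor_add, lTensor_smul, lTensor_smul]
  simp only [hone, honeL, hx0, hxi, hθr]
  rw [← rTensor_sum, ← lTensor_sum]
  module
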